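/- Single-resource Shortest Job First minimizes the product of completion times: with one unit-capacity resource and work amounts w_1 ≤ w_2 ≤ … ≤ w_n (> 0), the serial allocation that processes agents in increasing order of work yields completion times T_i = Σ_{k=1}^{i} w_k, and for any feasible allocation with completion times t_1, …, t_n, ∏_i t_i ≥ ∏_i T_i. -/

import Mathlib

set_option maxHeartbeats 800000


open MeasureTheory intervalIntegral

/-- Sum of the `i+1` smallest values of a monotone `w` is at most the sum over
any set of cardinality `i + 1`. -/
lemma aux_sum_Iic_le {n : ℕ} (w : Fin n → ℝ) (hmono : Monotone w) (i : Fin n)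
    (S : Finset (Fin n)) (hcard : S.card = (i : ℕ) + 1) :
    ∑ k ∈ Finset.Iic i, w k ≤ ∑ j ∈ S, w j := by
  classical
  set e := S.orderEmbOfFin hcard with he
  have hle : ∀ j : ℕ, ∀ h : j < (i : ℕ) + 1, j ≤ (e ⟨j, h⟩ : ℕ) := by
    intro j
    induction j with
    | zero => intro h; exact Nat.zero_le _
    | succ m ih =>
      intro h
      have hm : m < (i : ℕ) + 1 := Nat.lt_of_succ_lt h
      have h1 : e ⟨m, hm⟩ < e ⟨m + 1, h⟩ := e.strictMono (by simp [Fin.lt_def])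
      have := ih hm
      omega
  -- rewrite the Iic sum as a sum over Fin (i+1)
  have hin : (i : ℕ) + 1 ≤ n := i.2
  have hIic : Finset.Iic i = Finset.image (Fin.castLE hin) Finset.univ := by
    ext j
    simp only [Finset.mem_Iic, Finset.mem_image, Finset.mem_univ, true_and]
    constructor
    · intro hj
      have hj' : (j : ℕ) < (i : ℕ) + 1 := Nat.lt_succ_of_le (Fin.le_def.1 hj)
      exact ⟨⟨(j : ℕ), hj'⟩, Fin.ext rfl⟩
    · rintro ⟨k, rfl⟩
      exact Fin.le_def.2 (Nat.lt_succ_iff.mp k.2)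
  have hS : S = Finset.image e Finset.univ := by
    ext j
    simp only [Finset.mem_image, Finset.mem_univ, true_and]
    constructor
    · intro hj
      have : j ∈ Set.range e := by
        rw [Finset.range_orderEmbOfFin]; exact hj
      obtain ⟨k, hk⟩ := this
      exact ⟨k, hk⟩
    · rintro ⟨k, rfl⟩
      exact S.orderEmbOfFin_mem hcard k
  rw [hIic, hS, Finset.sum_image (fun a _ b _ h => Fin.castLE_injective hin h),
    Finset.sum_image (fun a _ b _ h => e.injective h)]
  apply Finset.sum_le_sum
  intro k _
  apply hmono
  rw [Fin.le_def]
  simpa using hle k.1 k.2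

/-- for a single unit-capacity resource with work amounts sorted
increasingly, SJF (completion times the partial sums of work) minimizes the
product of completion times over all feasible allocations. -/
theorem stmt_6 (n : ℕ) (w : Fin n → ℝ) (hw : ∀ i, 0 < w i) (hmono : Monotone w)
    (A : Fin n → ℝ → ℝ)
    (hA0 : ∀ i t, 0 ≤ A i t)
    (hsum : ∀ t : ℝ, ∑ i, A i t ≤ 1)
    (T : Fin n → ℝ) (hT0 : ∀ i, 0 ≤ T i)
    (hInt : ∀ i, ∀ x y : ℝ, IntervalIntegrable (A i) volume x y)
    (hdone : ∀ i, ∫ s in (0:ℝ)..(T i), A i s = w i) :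
    ∏ i, (∑ k ∈ Finset.Iic i, w k) ≤ ∏ i, T i := by
  classical
  obtain ⟨σ, hσ⟩ : ∃ σ : Equiv.Perm (Fin n), Monotone (T ∘ σ) :=
    ⟨Tuple.sort T, Tuple.monotone_sort T⟩
  rw [← Equiv.prod_comp σ T]
  apply Finset.prod_le_prod
  · intro i _
    exact Finset.sum_nonneg fun k _ => (hw k).le
  · intro i _
    set M := T (σ i) with hM
    have hM0 : 0 ≤ M := hT0 _
    set S : Finset (Fin n) := (Finset.Iic i).image σ with hSdef
    have hcard : S.card = (i : ℕ) + 1 := by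
      rw [hSdef, Finset.card_image_of_injective _ σ.injective, Fin.card_Iic]
    -- each completion time in S is at most M
    have hTle : ∀ j ∈ S, T j ≤ M := by
      intro j hj
      rw [hSdef, Finset.mem_image] at hj
      obtain ⟨k, hk, rfl⟩ := hj
      exact hσ (Finset.mem_Iic.1 hk)
    -- w j ≤ ∫_0^M A j for j ∈ S
    have hwle : ∀ j ∈ S, w j ≤ ∫ s in (0:ℝ)..M, A j s := by
      intro j hj
      rw [← hdone j]
      have hsplit : (∫ s in (0:ℝ)..(T j), A j s) + ∫ s in (T j)..M, A j s
          = ∫ s in (0:ℝ)..M, A j s :=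
        integral_add_adjacent_intervals (hInt j 0 (T j)) (hInt j (T j) M)
      have hnn : 0 ≤ ∫ s in (T j)..M, A j s :=
        intervalIntegral.integral_nonneg (hTle j hj) (fun s _ => hA0 j s)
      linarith
    calc ∑ k ∈ Finset.Iic i, w k
        ≤ ∑ j ∈ S, w j := aux_sum_Iic_le w hmono i S hcard
      _ ≤ ∑ j ∈ S, ∫ s in (0:ℝ)..M, A j s := Finset.sum_le_sum hwle
      _ = ∫ s in (0:ℝ)..M, ∑ j ∈ S, A j s :=
          (intervalIntegral.integral_finset_sum (fun j _ => hInt j 0 M)).symm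
      _ ≤ ∫ s in (0:ℝ)..M, (1 : ℝ) := by
          apply intervalIntegral.integral_mono_on hM0
          · have h1 := IntervalIntegrable.sum (μ := volume) (a := (0:ℝ)) (b := M)
              S (fun j _ => hInt j 0 M)
            have heq : (fun u => ∑ j ∈ S, A j u) = ∑ j ∈ S, A j := by
              ext u; simp
            rw [heq]; exact h1
          · exact intervalIntegrable_const
          · intro x _
            calc ∑ j ∈ S, A j x ≤ ∑ j, A j x :=
                  Finset.sum_le_sum_of_subset_of_nonneg (Finset.subset_univ S)
                    (fun j _ _ => hA0 j x)
              _ ≤ 1 := hsum x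
      _ = M := by simp
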